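/- For every natural number r ≥ 0, as a ℂ[α,β]-module the quotient J̄_r/J̄_{r+1} (well defined since J̄_{r+1} ⊆ J̄_r) is isomorphic to the direct sum ⊕_{i} M_{r+1,i}, where i ranges over the integers with −r ≤ i ≤ r and i ≡ r (mod 2), and where M_{r+1,i} = ℂ[α,β]/(α − 4i·√−1, β − 8) if r is even and M_{r+1,i} = ℂ[α,β]/(α − 4i, β + 8) if r is odd. In particular each M_{r+1,i} is one-dimensional over ℂ and dim_ℂ (J̄_r/J̄_{r+1}) = r + 1. -/

import Mathlib

open MvPolynomial DirectSum

/-- The pair (R̄¹_r, R̄²_r) of polynomials in ℂ[α,β] (α = X 0, β = X 1), defined by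
R̄¹_0 = 1, R̄²_0 = 0 and the recursion R̄¹_{r+1} = α·R̄¹_r + r²·R̄²_r,
R̄²_{r+1} = (β + (−1)^{r+1}·8)·R̄¹_r. -/
noncomputable def Rb : ℕ → MvPolynomial (Fin 2) ℂ × MvPolynomial (Fin 2) ℂ
  | 0 => (1, 0)
  | (r + 1) =>
      (X 0 * (Rb r).1 + C ((r : ℂ) ^ 2) * (Rb r).2,
       (X 1 + C ((-1 : ℂ) ^ (r + 1) * 8)) * (Rb r).1)

/-- The ideal J̄_r = (R̄¹_r, R̄²_r) ⊆ ℂ[α,β]. -/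
noncomputable def Jb (r : ℕ) : Ideal (MvPolynomial (Fin 2) ℂ) :=
  Ideal.span {(Rb r).1, (Rb r).2}

/-- The ℂ[α,β]-module M_{r+1,i} = ℂ[α,β]/(α − 4i·√−1, β − 8) if r is even, resp.
ℂ[α,β]/(α − 4i, β + 8) if r is odd. -/
abbrev Mmod (r : ℕ) (i : ℤ) : Type :=
  MvPolynomial (Fin 2) ℂ ⧸ Ideal.span
    {X 0 - C (if r % 2 = 0 then 4 * (i : ℂ) * Complex.I else 4 * (i : ℂ)),
     X 1 - C (if r % 2 = 0 then (8 : ℂ) else -8)}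

/-- The quotient J̄_r/J̄_{r+1}, realized (since J̄_{r+1} ⊆ J̄_r) as the image of the ideal J̄_r
in F̄_{r+1} = ℂ[α,β]/J̄_{r+1}, viewed as a ℂ[α,β]-module. -/
noncomputable def JbQuot (r : ℕ) : Submodule (MvPolynomial (Fin 2) ℂ)
    (MvPolynomial (Fin 2) ℂ ⧸ Jb (r + 1)) :=
  Submodule.restrictScalars (MvPolynomial (Fin 2) ℂ)
    ((Jb r).map (Ideal.Quotient.mk (Jb (r + 1))))

namespace Aux

abbrev Rg := MvPolynomial (Fin 2) ℂ

noncomputable def P (r : ℕ) : Rg := (Rb r).1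

lemma P_zero : P 0 = 1 := rfl
lemma P_one : P 1 = X 0 := by
  show X 0 * (Rb 0).1 + C (((0:ℕ) : ℂ)^2) * (Rb 0).2 = X 0
  norm_num [Rb]

lemma Rb_snd (r : ℕ) : (Rb (r+1)).2 = (X 1 + C ((-1 : ℂ) ^ (r + 1) * 8)) * P r := rfl

lemma P_succ_succ (r : ℕ) :
    P (r+2) = X 0 * P (r+1) + C ((((r+1):ℕ) : ℂ) ^ 2) * ((X 1 + C ((-1 : ℂ) ^ (r + 1) * 8)) * P r) := rfl

/-- substitution α ↦ X, β ↦ c -/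
noncomputable def σc (c : ℂ) : Rg →ₐ[ℂ] Polynomial ℂ :=
  aeval ![Polynomial.X, Polynomial.C c]

/-- section: X ↦ α -/
noncomputable def ρ : Polynomial ℂ →ₐ[ℂ] Rg := Polynomial.aeval (X 0)

@[simp] lemma σc_X0 (c : ℂ) : σc c (X 0) = Polynomial.X := by simp [σc]
@[simp] lemma σc_X1 (c : ℂ) : σc c (X 1) = Polynomial.C c := by simp [σc]
@[simp] lemma σc_C (c z : ℂ) : σc c (C z) = Polynomial.C z := by simp [σc]

lemma σc_ρ (c : ℂ) (p : Polynomial ℂ) : σc c (ρ p) = p := by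
  have : (σc c).comp ρ = AlgHom.id ℂ (Polynomial ℂ) := by
    apply Polynomial.algHom_ext
    simp [ρ]
  calc σc c (ρ p) = ((σc c).comp ρ) p := rfl
    _ = p := by rw [this]; rfl

lemma σc_P_monic (c : ℂ) : ∀ s, (σc c (P s)).Monic ∧ (σc c (P s)).natDegree = s := by
  have key : ∀ s, ((σc c (P s)).Monic ∧ (σc c (P s)).natDegree = s) ∧
      ((σc c (P (s+1))).Monic ∧ (σc c (P (s+1))).natDegree = s+1) := by
    intro s
    induction s with
    | zero =>
      constructor
      · constructor
        · simp [P_zero, Polynomial.monic_one]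
        · simp [P_zero]
      · rw [P_one]
        constructor
        · simpa using Polynomial.monic_X
        · simp
    | succ n ih =>
      refine ⟨ih.2, ?_⟩
      rw [P_succ_succ]
      have h1 : σc c (X 0 * P (n+1) + C ((((n+1):ℕ):ℂ) ^ 2) * ((X 1 + C ((-1 : ℂ) ^ (n + 1) * 8)) * P n))
          = Polynomial.X * σc c (P (n+1))
            + Polynomial.C ((((n+1):ℕ):ℂ)^2 * (c + (-1)^(n+1)*8)) * σc c (P n) := by
        simp only [map_add, map_mul, σc_X0, σc_X1, σc_C, map_pow]
        ring
      rw [h1]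
      set L := Polynomial.X * σc c (P (n+1)) with hL
      set Rt := Polynomial.C ((((n+1):ℕ):ℂ)^2 * (c + (-1)^(n+1)*8)) * σc c (P n) with hRt
      have hm := ih.2.1
      have hd := ih.2.2
      have hmonX : L.Monic := Polynomial.monic_X.mul hm
      have hdegX : L.natDegree = n + 2 := by
        rw [hL, Polynomial.natDegree_X_mul hm.ne_zero, hd]
      have hlt : Rt.degree < L.degree := by
        have h2 : Rt.degree ≤ (σc c (P n)).degree := by
          refine le_trans (Polynomial.degree_mul_le _ _) ?_
          calc (Polynomial.C ((((n+1):ℕ):ℂ)^2 * (c + (-1)^(n+1)*8))).degree + (σc c (P n)).degree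
              ≤ 0 + (σc c (P n)).degree := add_le_add Polynomial.degree_C_le le_rfl
            _ = (σc c (P n)).degree := zero_add _
        refine lt_of_le_of_lt h2 ?_
        rw [Polynomial.degree_eq_natDegree ih.1.1.ne_zero, ih.1.2,
          Polynomial.degree_eq_natDegree hmonX.ne_zero, hdegX]
        exact_mod_cast by omega
      refine ⟨hmonX.add_of_left hlt, ?_⟩
      rw [Polynomial.natDegree_eq_of_degree_eq (Polynomial.degree_add_eq_left_of_degree_lt hlt), hdegX]
  intro s; exact (key s).1

end Aux

namespace Aux2
open Aux

lemma sub_ρσ_mem (c : ℂ) (f : Rg) : f - ρ (σc c f) ∈ Ideal.span {X 1 - C c} := by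
  induction f using MvPolynomial.induction_on with
  | C a => simp [ρ]
  | add p q hp hq =>
    have : p + q - ρ (σc c (p + q)) = (p - ρ (σc c p)) + (q - ρ (σc c q)) := by
      rw [map_add, map_add]; ring
    rw [this]; exact Ideal.add_mem _ hp hq
  | mul_X p i hp =>
    have : p * X i - ρ (σc c (p * X i)) = (p - ρ (σc c p)) * X i + ρ (σc c p) * (X i - ρ (σc c (X i))) := by
      rw [map_mul, map_mul]; ring
    rw [this]
    refine Ideal.add_mem _ (Ideal.mul_mem_right _ _ hp) (Ideal.mul_mem_left _ _ ?_)
    fin_cases i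
    · simp [ρ]
    · have : σc c (X 1) = Polynomial.C c := σc_X1 c
      rw [show (⟨1, by omega⟩ : Fin 2) = (1 : Fin 2) from rfl, this]
      have : ρ (Polynomial.C c) = C c := by simp [ρ]
      rw [this]
      exact Ideal.subset_span rfl

lemma ker_σc (c : ℂ) : RingHom.ker (σc c : Rg →+* Polynomial ℂ) = Ideal.span {X 1 - C c} := by
  apply le_antisymm
  · intro f hf
    have h0 : σc c f = 0 := hf
    have := sub_ρσ_mem c f
    rwa [h0, map_zero, sub_zero] at this
  · rw [Ideal.span_le]
    rintro x rfl
    simp [RingHom.mem_ker]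

lemma prime_X1_sub_C (c : ℂ) : Prime (X 1 - C c : Rg) := by
  rw [← Ideal.span_singleton_prime]
  · rw [← ker_σc c]
    exact RingHom.ker_isPrime _
  · intro h
    have h1 : MvPolynomial.eval (fun _ => c + 1) (X 1 - C c : Rg) = 1 := by simp
    rw [h] at h1
    simp at h1

lemma P_ne_zero (r : ℕ) : P r ≠ 0 := by
  intro h
  have := (σc_P_monic 0 r).1
  rw [h, map_zero] at this
  exact this.ne_zero rfl

lemma no_common_prime : ∀ r (d : Rg), Prime d → d ∣ P r → d ∣ P (r+1) → False := by
  intro r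
  induction r with
  | zero =>
    intro d hd h0 _
    rw [P_zero] at h0
    exact hd.not_unit (isUnit_of_dvd_one h0)
  | succ n ih =>
    intro d hd h1 h2
    have hdvd : d ∣ C ((((n+1):ℕ):ℂ) ^ 2) * ((X 1 + C ((-1 : ℂ) ^ (n + 1) * 8)) * P n) := by
      have : C ((((n+1):ℕ):ℂ) ^ 2) * ((X 1 + C ((-1 : ℂ) ^ (n + 1) * 8)) * P n)
          = P (n+2) - X 0 * P (n+1) := by rw [P_succ_succ]; ring
      rw [this]
      exact dvd_sub h2 (Dvd.dvd.mul_left h1 _)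
    have hC : IsUnit (C ((((n+1):ℕ):ℂ) ^ 2) : Rg) := by
      refine IsUnit.map (MvPolynomial.C : ℂ →+* Rg) (isUnit_iff_ne_zero.mpr ?_)
      exact pow_ne_zero _ (Nat.cast_ne_zero.mpr (Nat.succ_ne_zero n))
    have hdvd2 : d ∣ (X 1 + C ((-1 : ℂ) ^ (n + 1) * 8)) * P n := hC.dvd_mul_left.mp hdvd
    rcases hd.dvd_mul.mp hdvd2 with h | h
    · -- d divides X 1 + C _, which is prime
      have hw : (X 1 + C ((-1 : ℂ) ^ (n + 1) * 8) : Rg) = X 1 - C (-((-1 : ℂ) ^ (n + 1) * 8)) := by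
        rw [map_neg, sub_neg_eq_add]
      have hwp : Prime (X 1 + C ((-1 : ℂ) ^ (n + 1) * 8) : Rg) := by
        rw [hw]; exact prime_X1_sub_C _
      have hassoc := (hd.associated_of_dvd hwp h).symm
      have hdvdP : (X 1 + C ((-1 : ℂ) ^ (n + 1) * 8) : Rg) ∣ P (n+1) := hassoc.dvd.trans h1
      set e : ℂ := -((-1 : ℂ) ^ (n + 1) * 8) with he
      obtain ⟨g, hg⟩ := hdvdP
      have : σc e (P (n+1)) = 0 := by
        rw [hg, map_mul, hw, map_sub, σc_X1, σc_C, sub_self, zero_mul]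
      exact (σc_P_monic e (n+1)).1.ne_zero this
    · exact ih d hd h h1

lemma isRelPrime_P (r : ℕ) : IsRelPrime (P (r+1)) (P r) := by
  intro d hd1 hd2
  by_contra hu
  have hdne : d ≠ 0 := by
    rintro rfl
    exact P_ne_zero r (zero_dvd_iff.mp hd2)
  obtain ⟨q, hq, hqd⟩ := WfDvdMonoid.exists_irreducible_factor hu hdne
  exact no_common_prime r q (UniqueFactorizationMonoid.irreducible_iff_prime.mp hq)
    (hqd.trans hd2) (hqd.trans hd1)

/-- index finset -/
noncomputable def S (r : ℕ) : Finset ℤ :=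
  (Finset.Icc (-(r:ℤ)) (r:ℤ)).filter (fun i => i % 2 = (r:ℤ) % 2)

lemma mem_S {r : ℕ} {i : ℤ} : i ∈ S r ↔ (-(r:ℤ) ≤ i ∧ i ≤ (r:ℤ) ∧ i % 2 = (r:ℤ) % 2) := by
  simp [S, Finset.mem_filter, Finset.mem_Icc, and_assoc]

lemma S_zero : S 0 = {0} := by
  ext i; simp [mem_S]; omega

lemma S_one : S 1 = {-1, 1} := by
  ext i
  simp [mem_S, Finset.mem_insert]
  omega

lemma S_succ_succ (r : ℕ) : S (r+2) = insert ((r:ℤ)+2) (insert (-(r:ℤ)-2) (S r)) := by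
  ext i
  simp only [mem_S, Finset.mem_insert]
  push_cast
  omega

lemma not_mem_ins (r : ℕ) : ((r:ℤ)+2) ∉ insert (-(r:ℤ)-2) (S r) := by
  simp only [Finset.mem_insert, mem_S]
  omega

lemma not_mem_S (r : ℕ) : (-(r:ℤ)-2) ∉ S r := by
  simp only [mem_S]; omega

lemma card_S (r : ℕ) : (S r).card = r + 1 := by
  induction r using Nat.strong_induction_on with
  | _ r ih =>
    match r with
    | 0 => rw [S_zero]; rfl
    | 1 => rw [S_one]; rfl
    | (n+2) =>
      rw [S_succ_succ, Finset.card_insert_of_notMem (not_mem_ins n),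
        Finset.card_insert_of_notMem (not_mem_S n), ih n (by omega)]

end Aux2

namespace Aux3
open Aux Aux2

lemma σc_P_rec (c : ℂ) (s : ℕ) :
    σc c (P (s+2)) = Polynomial.X * σc c (P (s+1))
      + Polynomial.C ((((s+1):ℕ):ℂ)^2 * (c + (-1)^(s+1)*8)) * σc c (P s) := by
  rw [P_succ_succ]
  simp only [map_add, map_mul, σc_X0, σc_X1, σc_C, map_pow]
  ring

lemma pair_factor_I (z : ℂ) :
    (Polynomial.X - Polynomial.C (4*z*Complex.I)) * (Polynomial.X + Polynomial.C (4*z*Complex.I))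
      = Polynomial.X^2 + Polynomial.C (z^2*16) := by
  have h : (4*z*Complex.I)^2 = -(z^2*16) := by
    rw [mul_pow, mul_pow, Complex.I_sq]; ring
  calc (Polynomial.X - Polynomial.C (4*z*Complex.I)) * (Polynomial.X + Polynomial.C (4*z*Complex.I))
      = Polynomial.X^2 - Polynomial.C (4*z*Complex.I)^2 := by ring
    _ = _ := by rw [← Polynomial.C_pow, h, map_neg]; ring

lemma pair_factor (z : ℂ) :
    (Polynomial.X - Polynomial.C (4*z)) * (Polynomial.X + Polynomial.C (4*z))
      = Polynomial.X^2 - Polynomial.C (z^2*16) := by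
  have h : (4*z)^2 = z^2*16 := by ring
  calc (Polynomial.X - Polynomial.C (4*z)) * (Polynomial.X + Polynomial.C (4*z))
      = Polynomial.X^2 - Polynomial.C (4*z)^2 := by ring
    _ = _ := by rw [← Polynomial.C_pow, h]

lemma even1 : ∀ m : ℕ, σc 8 (P (2*m+1)) =
    ∏ i ∈ S (2*m), (Polynomial.X - Polynomial.C (4*(i:ℂ)*Complex.I)) := by
  intro m
  induction m with
  | zero =>
    rw [show 2*0+1 = 1 from rfl, P_one, σc_X0, show 2*0 = 0 from rfl, S_zero]
    simp
  | succ m ih =>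
    have hA : σc 8 (P (2*m+2)) = Polynomial.X * σc 8 (P (2*m+1)) := by
      have h := σc_P_rec 8 (2*m)
      rw [show ((((2*m+1):ℕ):ℂ)^2 * (8 + (-1)^(2*m+1)*8)) = 0 by
        rw [Odd.neg_one_pow ⟨m, by ring⟩]; ring] at h
      rwa [map_zero, zero_mul, add_zero] at h
    have hB : σc 8 (P (2*m+3)) = Polynomial.X * σc 8 (P (2*m+2))
        + Polynomial.C ((((2*m+2):ℕ):ℂ)^2 * 16) * σc 8 (P (2*m+1)) := by
      have h := σc_P_rec 8 (2*m+1)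
      rw [show (2*m+1+2) = 2*m+3 by ring, show (2*m+1+1) = 2*m+2 by ring,
        show ((((2*m+2):ℕ):ℂ)^2 * (8 + (-1)^(2*m+2)*8)) = (((2*m+2):ℕ):ℂ)^2 * 16 by
          rw [Even.neg_one_pow ⟨m+1, by ring⟩]; ring] at h
      exact h
    have hC : σc 8 (P (2*m+3)) =
        (Polynomial.X^2 + Polynomial.C ((((2*m+2):ℕ):ℂ)^2*16)) * σc 8 (P (2*m+1)) := by
      rw [hB, hA]; ring
    rw [show 2*(m+1)+1 = 2*m+3 by ring, show 2*(m+1) = 2*m+2 by ring, hC, ih,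
      S_succ_succ (2*m), Finset.prod_insert (not_mem_ins (2*m)),
      Finset.prod_insert (not_mem_S (2*m)),
      show ((((2*m:ℕ):ℤ)+2 : ℤ):ℂ) = (((2*m+2:ℕ):ℂ)) by push_cast; ring,
      show (((-((2*m:ℕ):ℤ))-2 : ℤ):ℂ) = -(((2*m+2:ℕ):ℂ)) by push_cast; ring,
      show (4 * -((((2*m+2:ℕ)):ℂ)) * Complex.I) = -(4 * (((2*m+2:ℕ)):ℂ) * Complex.I) by ring,
      map_neg, sub_neg_eq_add, ← mul_assoc, pair_factor_I]

lemma odd1 : ∀ m : ℕ, σc (-8) (P (2*m+2)) =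
    ∏ i ∈ S (2*m+1), (Polynomial.X - Polynomial.C (4*(i:ℂ))) := by
  intro m
  induction m with
  | zero =>
    have h := σc_P_rec (-8) 0
    rw [show ((((0+1):ℕ):ℂ)^2 * (-8 + (-1)^(0+1)*8)) = -(1^2*16) by norm_num] at h
    rw [show (0+2) = 2 from rfl, show (0+1) = 1 from rfl, P_one, P_zero, σc_X0, map_one] at h
    rw [show 2*0+2 = 2 from rfl, show 2*0+1 = 1 from rfl, S_one,
      Finset.prod_insert (by simp), Finset.prod_singleton,
      show (((-1:ℤ)):ℂ) = -1 by push_cast; ring, show (((1:ℤ)):ℂ) = 1 by push_cast; ring,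
      show (4 * (-1:ℂ)) = -(4*1) by ring, map_neg, sub_neg_eq_add, mul_comm, pair_factor, h]
    rw [map_neg]
    ring
  | succ m ih =>
    have hA : σc (-8) (P (2*m+3)) = Polynomial.X * σc (-8) (P (2*m+2)) := by
      have h := σc_P_rec (-8) (2*m+1)
      rw [show (2*m+1+2) = 2*m+3 by ring, show (2*m+1+1) = 2*m+2 by ring,
        show ((((2*m+2):ℕ):ℂ)^2 * (-8 + (-1)^(2*m+2)*8)) = 0 by
          rw [Even.neg_one_pow ⟨m+1, by ring⟩]; ring] at h
      rwa [map_zero, zero_mul, add_zero] at h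
    have hB : σc (-8) (P (2*m+4)) = Polynomial.X * σc (-8) (P (2*m+3))
        + Polynomial.C (-((((2*m+3):ℕ):ℂ)^2 * 16)) * σc (-8) (P (2*m+2)) := by
      have h := σc_P_rec (-8) (2*m+2)
      rw [show (2*m+2+2) = 2*m+4 by ring, show (2*m+2+1) = 2*m+3 by ring,
        show ((((2*m+3):ℕ):ℂ)^2 * (-8 + (-1)^(2*m+3)*8)) = -((((2*m+3):ℕ):ℂ)^2 * 16) by
          rw [Odd.neg_one_pow ⟨m+1, by ring⟩]; ring] at h
      exact h
    have hC : σc (-8) (P (2*m+4)) =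
        (Polynomial.X^2 - Polynomial.C ((((2*m+3):ℕ):ℂ)^2*16)) * σc (-8) (P (2*m+2)) := by
      rw [hB, hA, map_neg]; ring
    rw [show 2*(m+1)+2 = 2*m+4 by ring, show 2*(m+1)+1 = 2*m+3 by ring, hC, ih,
      S_succ_succ (2*m+1), Finset.prod_insert (not_mem_ins (2*m+1)),
      Finset.prod_insert (not_mem_S (2*m+1)),
      show ((((2*m+1:ℕ):ℤ)+2 : ℤ):ℂ) = (((2*m+3:ℕ):ℂ)) by push_cast; ring,
      show (((-((2*m+1:ℕ):ℤ))-2 : ℤ):ℂ) = -(((2*m+3:ℕ):ℂ)) by push_cast; ring,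
      show (4 * -((((2*m+3:ℕ)):ℂ))) = -(4 * (((2*m+3:ℕ)):ℂ)) by ring,
      map_neg, sub_neg_eq_add, ← mul_assoc, pair_factor]

end Aux3

namespace Aux4
open Aux Aux2 Aux3

noncomputable def ee (r : ℕ) : ℂ := if r % 2 = 0 then (8:ℂ) else -8
noncomputable def cc (r : ℕ) (i : ℤ) : ℂ :=
  if r % 2 = 0 then 4 * (i:ℂ) * Complex.I else 4 * (i:ℂ)

lemma key (r : ℕ) : σc (ee r) (P (r+1)) = ∏ i ∈ S r, (Polynomial.X - Polynomial.C (cc r i)) := by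
  rcases Nat.even_or_odd r with he | ho
  · obtain ⟨m, rfl⟩ := he
    rw [show m+m = 2*m by ring]
    have h0 : (2*m) % 2 = 0 := by omega
    rw [show ee (2*m) = 8 by simp [ee, h0], even1 m]
    exact Finset.prod_congr rfl (fun i _ => by
      rw [show cc (2*m) i = 4*(i:ℂ)*Complex.I by simp [cc, h0]])
  · obtain ⟨m, rfl⟩ := ho
    have h1 : (2*m+1) % 2 = 1 := by omega
    rw [show ee (2*m+1) = -8 by simp [ee, h1], show (2*m+1+1) = 2*m+2 by ring, odd1 m]
    exact Finset.prod_congr rfl (fun i _ => by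
      rw [show cc (2*m+1) i = 4*(i:ℂ) by simp [cc, h1]])

lemma cc_injective (r : ℕ) : Function.Injective (cc r) := by
  intro a b h
  unfold cc at h
  split_ifs at h
  · have h4 : (4:ℂ) * (a:ℂ) = 4 * b :=
      mul_right_cancel₀ Complex.I_ne_zero h
    have : (a:ℂ) = b := mul_left_cancel₀ (by norm_num) h4
    exact_mod_cast this
  · have : (a:ℂ) = b := mul_left_cancel₀ (by norm_num) h
    exact_mod_cast this

noncomputable def Kid (r : ℕ) (i : ℤ) : Ideal Rg :=
  Ideal.span {X 0 - C (cc r i), X 1 - C (ee r)}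

noncomputable def Ispan (r : ℕ) : Ideal Rg := Ideal.span {P (r+1), X 1 - C (ee r)}

lemma X1_mem_Kid (r : ℕ) (i : ℤ) : (X 1 - C (ee r) : Rg) ∈ Kid r i :=
  Ideal.subset_span (by simp)

lemma span_X1_le_Kid (r : ℕ) (i : ℤ) : Ideal.span {(X 1 - C (ee r) : Rg)} ≤ Kid r i := by
  rw [Ideal.span_le]
  rintro x rfl
  exact X1_mem_Kid r i

lemma ρ_σ_P (r : ℕ) : ρ (σc (ee r) (P (r+1))) = ∏ j ∈ S r, (X 0 - C (cc r j) : Rg) := by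
  rw [key, map_prod]
  exact Finset.prod_congr rfl (fun j _ => by
    rw [map_sub]
    simp [ρ])

lemma Pr1_mem_Kid {r : ℕ} {i : ℤ} (hi : i ∈ S r) : P (r+1) ∈ Kid r i := by
  have h1 : P (r+1) - ρ (σc (ee r) (P (r+1))) ∈ Ideal.span {(X 1 - C (ee r) : Rg)} :=
    sub_ρσ_mem _ _
  obtain ⟨t, ht⟩ : (X 0 - C (cc r i) : Rg) ∣ ∏ j ∈ S r, (X 0 - C (cc r j)) :=
    Finset.dvd_prod_of_mem _ hi
  have heq : P (r+1) = (P (r+1) - ρ (σc (ee r) (P (r+1)))) + (X 0 - C (cc r i)) * t := by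
    rw [← ht, ← ρ_σ_P]; ring
  rw [heq]
  exact Ideal.add_mem _ (span_X1_le_Kid r i h1)
    (Ideal.mul_mem_right _ _ (Ideal.subset_span (by simp)))

lemma Ispan_le_Kid {r : ℕ} {i : ℤ} (hi : i ∈ S r) : Ispan r ≤ Kid r i := by
  rw [Ispan, Ideal.span_le]
  rintro x hx
  rcases hx with rfl | hx
  · exact Pr1_mem_Kid hi
  · rw [Set.mem_singleton_iff] at hx; subst hx; exact X1_mem_Kid r i

lemma mem_Ispan_of_forall {r : ℕ} {f : Rg} (hf : ∀ i ∈ S r, f ∈ Kid r i) : f ∈ Ispan r := by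
  have hdvd : ∀ i ∈ S r, (Polynomial.X - Polynomial.C (cc r i)) ∣ σc (ee r) f := by
    intro i hi
    obtain ⟨a, b, hab⟩ := Ideal.mem_span_pair.mp (hf i hi)
    rw [← hab, map_add, map_mul, map_mul, map_sub, map_sub, σc_X0, σc_X1, σc_C, σc_C,
      sub_self, mul_zero, add_zero]
    exact Dvd.intro_left _ rfl
  have hcop : Set.Pairwise ↑(S r) (Function.onFun IsCoprime fun i : ℤ => Polynomial.X - Polynomial.C (cc r i)) :=
    fun i _ j _ hij => Polynomial.pairwise_coprime_X_sub_C (cc_injective r) hij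
  obtain ⟨g, hg⟩ : (∏ i ∈ S r, (Polynomial.X - Polynomial.C (cc r i))) ∣ σc (ee r) f :=
    Finset.prod_dvd_of_coprime hcop hdvd
  have hD : f - ρ (σc (ee r) f) ∈ Ideal.span {(X 1 - C (ee r) : Rg)} := sub_ρσ_mem _ _
  have hE : P (r+1) - ρ (σc (ee r) (P (r+1))) ∈ Ideal.span {(X 1 - C (ee r) : Rg)} :=
    sub_ρσ_mem _ _
  have hX1 : Ideal.span {(X 1 - C (ee r) : Rg)} ≤ Ispan r := by
    rw [Ideal.span_le]; rintro x rfl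
    exact Ideal.subset_span (by simp [Ispan])
  have heq : f = (f - ρ (σc (ee r) f))
      - (P (r+1) - ρ (σc (ee r) (P (r+1)))) * ρ g + P (r+1) * ρ g := by
    have : ρ (σc (ee r) f) = ρ (σc (ee r) (P (r+1))) * ρ g := by
      rw [hg, map_mul, key]
    rw [this]; ring
  rw [heq]
  refine Ideal.add_mem _ (Ideal.sub_mem _ (hX1 hD) (Ideal.mul_mem_right _ _ (hX1 hE))) ?_
  exact Ideal.mul_mem_right _ _ (Ideal.subset_span (by simp [Ispan]))

abbrev Tsub (r : ℕ) := {i : ℤ // -(r:ℤ) ≤ i ∧ i ≤ (r:ℤ) ∧ i % 2 = (r:ℤ) % 2}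

noncomputable instance TsubFintype (r : ℕ) : Fintype (Tsub r) :=
  Fintype.ofFinset (S r) (fun i => mem_S)

lemma card_Tsub (r : ℕ) : Fintype.card (Tsub r) = r + 1 := by
  rw [← card_S r]
  exact Fintype.card_ofFinset _ _

lemma Ispan_eq_inf (r : ℕ) : Ispan r = ⨅ i : Tsub r, Kid r i.1 := by
  apply le_antisymm
  · rw [le_iInf_iff]
    intro i
    exact Ispan_le_Kid (mem_S.mpr i.2)
  · intro f hf
    rw [Submodule.mem_iInf] at hf
    exact mem_Ispan_of_forall (fun i hi => hf ⟨i, mem_S.mp hi⟩)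

lemma kid_pairwise_coprime (r : ℕ) :
    Pairwise fun i j : Tsub r => IsCoprime (Kid r i.1) (Kid r j.1) := by
  intro i j hij
  have hne : cc r i.1 ≠ cc r j.1 := fun h =>
    hij (Subtype.ext (cc_injective r h))
  set u : ℂ := (cc r j.1 - cc r i.1)⁻¹ with hu
  rw [Ideal.isCoprime_iff_exists]
  refine ⟨C u * (X 0 - C (cc r i.1)), Ideal.mul_mem_left _ _ (Ideal.subset_span (by simp [Kid])),
    C (-u) * (X 0 - C (cc r j.1)), Ideal.mul_mem_left _ _ (Ideal.subset_span (by simp [Kid])), ?_⟩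
  have h1 : (C u * (X 0 - C (cc r i.1)) + C (-u) * (X 0 - C (cc r j.1)) : Rg)
      = C u * (C (cc r j.1) - C (cc r i.1)) := by
    rw [map_neg]; ring
  rw [h1, ← map_sub, ← map_mul, hu, inv_mul_cancel₀ (sub_ne_zero_of_ne (Ne.symm hne)), map_one]

end Aux4

namespace Aux5
open Aux Aux2 Aux3 Aux4

lemma w_eq (r : ℕ) : (X 1 + C ((-1:ℂ)^(r+1) * 8) : Rg) = X 1 - C (ee r) := by
  rcases Nat.even_or_odd r with he | ho
  · have h0 : r % 2 = 0 := Nat.even_iff.mp he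
    obtain ⟨m, rfl⟩ := he
    rw [show (-1:ℂ)^(m+m+1) = -1 from Odd.neg_one_pow ⟨m, by ring⟩,
      show ee (m+m) = 8 by simp [ee, h0]]
    rw [show ((-1:ℂ) * 8) = -8 by ring, map_neg, sub_eq_add_neg]
  · have h1 : r % 2 = 1 := Nat.odd_iff.mp ho
    obtain ⟨m, rfl⟩ := ho
    rw [show (-1:ℂ)^(2*m+1+1) = 1 from Even.neg_one_pow ⟨m+1, by ring⟩,
      show ee (2*m+1) = -8 by simp [ee, h1]]
    rw [map_neg, sub_neg_eq_add, one_mul]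

lemma Jb_succ_eq (r : ℕ) : Jb (r+1) = Ideal.span {P (r+1), (X 1 - C (ee r)) * P r} := by
  have : (Rb (r+1)).2 = (X 1 - C (ee r)) * P r := by rw [Rb_snd, w_eq]
  rw [Jb, this]
  rfl

lemma P_succ_mem_Jb (r : ℕ) : P (r+1) ∈ Jb (r+1) := by
  rw [Jb_succ_eq]
  exact Ideal.subset_span (by simp)

noncomputable def xgen (r : ℕ) : Rg ⧸ Jb (r+1) := Ideal.Quotient.mk (Jb (r+1)) (P r)

noncomputable def ψ (r : ℕ) : Rg →ₗ[Rg] Rg ⧸ Jb (r+1) :=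
  LinearMap.toSpanSingleton Rg _ (xgen r)

lemma ψ_apply (r : ℕ) (f : Rg) : ψ r f = Ideal.Quotient.mk (Jb (r+1)) (f * P r) := by
  show f • xgen r = _
  have h1 : xgen r = Submodule.Quotient.mk (P r) := rfl
  rw [h1, ← Submodule.Quotient.mk_smul, smul_eq_mul]
  rfl

lemma ker_ψ (r : ℕ) : LinearMap.ker (ψ r) = Ispan r := by
  ext f
  rw [LinearMap.mem_ker, ψ_apply, Ideal.Quotient.eq_zero_iff_mem]
  constructor
  · intro hf
    rw [Jb_succ_eq, Ideal.mem_span_pair] at hf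
    obtain ⟨a, b, hab⟩ := hf
    have hdvd : P (r+1) ∣ (f - b * (X 1 - C (ee r))) := by
      refine (isRelPrime_P r).dvd_of_dvd_mul_right (y := f - b * (X 1 - C (ee r))) ⟨a, ?_⟩
      linear_combination -hab
    obtain ⟨t, ht⟩ := hdvd
    rw [Ispan, Ideal.mem_span_pair]
    exact ⟨t, b, by linear_combination -ht⟩
  · intro hf
    rw [Ispan, Ideal.mem_span_pair] at hf
    obtain ⟨a, b, hab⟩ := hf
    rw [← hab, Jb_succ_eq]
    rw [add_mul, mul_assoc, mul_assoc]
    refine Ideal.add_mem _ (Ideal.mul_mem_left _ _ ?_) (Ideal.mul_mem_left _ _ ?_)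
    · exact Ideal.mul_mem_right _ _ (Ideal.subset_span (by simp))
    · exact Ideal.subset_span (by simp)

end Aux5

namespace Aux6
open Aux Aux2 Aux3 Aux4 Aux5

example (r : ℕ) (i : ℤ) : Mmod r i = (Rg ⧸ Kid r i) := rfl

lemma JbQuot_eq_span (r : ℕ) : JbQuot r = Submodule.span Rg {xgen r} := by
  rw [JbQuot, show Jb r = Ideal.span {(Rb r).1, (Rb r).2} from rfl,
    Ideal.map_span, Set.image_insert_eq, Set.image_singleton]
  rw [← Ideal.submodule_span_eq, Submodule.restrictScalars_span Rg _
    (by rw [Ideal.Quotient.algebraMap_eq]; exact Ideal.Quotient.mk_surjective)]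
  apply le_antisymm
  · rw [Submodule.span_le]
    rintro x hx
    rcases hx with rfl | hx
    · exact Submodule.subset_span rfl
    · rw [Set.mem_singleton_iff] at hx
      subst hx
      -- show mk (Rb r).2 ∈ span {xgen r}
      match r with
      | 0 =>
        have : ((Rb 0).2 : Rg) = 0 := rfl
        rw [this, map_zero]
        exact Submodule.zero_mem _
      | (n+1) =>
        rw [SetLike.mem_coe, Submodule.mem_span_singleton]
        set k : ℂ := (((n+1):ℕ):ℂ)^2 with hk
        have hkne : k ≠ 0 := pow_ne_zero _ (Nat.cast_ne_zero.mpr (Nat.succ_ne_zero n))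
        refine ⟨-(C k⁻¹ * X 0 : Rg), ?_⟩
        show (-(C k⁻¹ * X 0 : Rg)) • xgen (n+1) = Ideal.Quotient.mk (Jb (n+2)) (Rb (n+1)).2
        have hsm : (-(C k⁻¹ * X 0 : Rg)) • xgen (n+1)
            = Ideal.Quotient.mk (Jb (n+2)) (-(C k⁻¹ * X 0) * P (n+1)) := by
          have h1 : xgen (n+1) = Submodule.Quotient.mk (P (n+1)) := rfl
          rw [h1, ← Submodule.Quotient.mk_smul]
          rfl
        rw [hsm]
        rw [Ideal.Quotient.mk_eq_mk_iff_sub_mem]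
        have hCk : (C k⁻¹ * C k : Rg) = 1 := by
          rw [← map_mul, inv_mul_cancel₀ hkne, map_one]
        have hid : -(C k⁻¹ * X 0) * P (n+1) - (Rb (n+1)).2 = -(C k⁻¹ * P (n+2)) := by
          rw [P_succ_succ n, Rb_snd n]
          linear_combination (X 1 + C ((-1:ℂ)^(n+1) * 8)) * P n * hCk
        rw [hid]
        exact neg_mem (Ideal.mul_mem_left _ _ (P_succ_mem_Jb (n+1)))
  · rw [Submodule.span_le, Set.singleton_subset_iff]
    exact Submodule.subset_span (Set.mem_insert _ _)

lemma JbQuot_eq_range (r : ℕ) : JbQuot r = LinearMap.range (ψ r) := by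
  rw [JbQuot_eq_span, ψ, LinearMap.span_singleton_eq_range]

end Aux6

namespace Aux7
open Aux Aux2 Aux3 Aux4 Aux5 Aux6

noncomputable def LmapPi (r : ℕ) : (Rg ⧸ Ispan r) →ₗ[Rg] ((i : Tsub r) → Mmod r i.1) :=
  Submodule.liftQ (Ispan r) (LinearMap.pi (fun i : Tsub r => (Kid r i.1).mkQ))
    (by
      erw [LinearMap.ker_pi]
      erw [iInf_congr fun i : Tsub r => Submodule.ker_mkQ (Kid r i.1)]
      rw [← Ispan_eq_inf])

lemma LmapPi_bij (r : ℕ) : Function.Bijective (LmapPi r) := by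
  constructor
  · rw [← LinearMap.ker_eq_bot]
    apply Submodule.ker_liftQ_eq_bot
    erw [LinearMap.ker_pi]
    erw [iInf_congr fun i : Tsub r => Submodule.ker_mkQ (Kid r i.1)]
    rw [← Ispan_eq_inf]
  · intro y
    obtain ⟨z, hz⟩ := Ideal.quotientInfToPiQuotient_surj
      (I := fun i : Tsub r => Kid r i.1) (kid_pairwise_coprime r) y
    obtain ⟨f, rfl⟩ := Ideal.Quotient.mk_surjective z
    refine ⟨Submodule.Quotient.mk f, ?_⟩
    funext i
    have h1 : LmapPi r (Submodule.Quotient.mk f) i = Submodule.Quotient.mk f := by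
      rw [LmapPi, Submodule.liftQ_apply]
      rfl
    rw [h1, ← hz]
    rw [Ideal.quotientInfToPiQuotient_mk']
    rfl

noncomputable def crtEquiv (r : ℕ) : (Rg ⧸ Ispan r) ≃ₗ[Rg] ((i : Tsub r) → Mmod r i.1) :=
  LinearEquiv.ofBijective (LmapPi r) (LmapPi_bij r)

noncomputable def bigEquiv (r : ℕ) :
    (JbQuot r) ≃ₗ[Rg] (⨁ i : Tsub r, Mmod r i.1) :=
  LinearEquiv.ofEq _ _ (JbQuot_eq_range r) ≪≫ₗ
    ((Submodule.quotEquivOfEq _ _ (ker_ψ r)).symm ≪≫ₗ (ψ r).quotKerEquivRange).symm ≪≫ₗ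
    crtEquiv r ≪≫ₗ
    (DirectSum.linearEquivFunOnFintype Rg (Tsub r) (fun i => Mmod r i.1)).symm

noncomputable def MiAlgEquiv (r : ℕ) (i : ℤ) : (Rg ⧸ Kid r i) ≃ₐ[ℂ] ℂ := by
  have hsurj : Function.Surjective (aeval (R := ℂ) ![cc r i, ee r] : Rg →ₐ[ℂ] ℂ) := by
    intro z
    exact ⟨C z, by simp⟩
  have hker : RingHom.ker (aeval (R := ℂ) ![cc r i, ee r] : Rg →ₐ[ℂ] ℂ) = Kid r i := by
    apply le_antisymm
    · intro f hf
      have h0 : aeval (R := ℂ) ![cc r i, ee r] f = 0 := hf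
      have hmem : f - C (aeval (R := ℂ) ![cc r i, ee r] f) ∈ Kid r i := by
        clear h0 hf
        induction f using MvPolynomial.induction_on with
        | C a => simp
        | add p q hp hq =>
          have : p + q - C (aeval (R := ℂ) ![cc r i, ee r] (p + q))
              = (p - C (aeval (R := ℂ) ![cc r i, ee r] p))
                + (q - C (aeval (R := ℂ) ![cc r i, ee r] q)) := by
            rw [map_add, map_add]; ring
          rw [this]; exact Ideal.add_mem _ hp hq
        | mul_X p j hp =>
          have hXj : (X j - C (![cc r i, ee r] j) : Rg) ∈ Kid r i := by
            fin_cases j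
            · exact Ideal.subset_span (by simp [Kid])
            · exact Ideal.subset_span (by simp [Kid])
          have : p * X j - C (aeval (R := ℂ) ![cc r i, ee r] (p * X j))
              = (p - C (aeval (R := ℂ) ![cc r i, ee r] p)) * X j
                + C (aeval (R := ℂ) ![cc r i, ee r] p) * (X j - C (![cc r i, ee r] j)) := by
            rw [map_mul, aeval_X, map_mul]; ring
          rw [this]
          exact Ideal.add_mem _ (Ideal.mul_mem_right _ _ hp) (Ideal.mul_mem_left _ _ hXj)
      rwa [h0, map_zero, sub_zero] at hmem
    · rw [Kid, Ideal.span_le]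
      rintro x hx
      rcases hx with rfl | hx
      · simp [RingHom.mem_ker]
      · rw [Set.mem_singleton_iff] at hx; subst hx
        simp [RingHom.mem_ker]
  exact (Ideal.quotientEquivAlgOfEq ℂ hker.symm).trans
    (Ideal.quotientKerAlgEquivOfSurjective hsurj)

noncomputable def MiLinEquiv (r : ℕ) (i : ℤ) : (Mmod r i) ≃ₗ[ℂ] ℂ :=
  (MiAlgEquiv r i).toLinearEquiv

lemma finrank_Mi (r : ℕ) (i : ℤ) : Module.finrank ℂ (Mmod r i) = 1 := by
  rw [(MiLinEquiv r i).finrank_eq, Module.finrank_self]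

end Aux7

/-- For every r ≥ 0, as a ℂ[α,β]-module the quotient J̄_r/J̄_{r+1} is isomorphic to the direct
sum ⊕_i M_{r+1,i}, where i ranges over the integers with −r ≤ i ≤ r and i ≡ r (mod 2). In
particular each M_{r+1,i} is one-dimensional over ℂ and dim_ℂ (J̄_r/J̄_{r+1}) = r + 1. -/
theorem stmt8 (r : ℕ) :
    Nonempty ((JbQuot r) ≃ₗ[MvPolynomial (Fin 2) ℂ]
      (⨁ i : {i : ℤ // -(r : ℤ) ≤ i ∧ i ≤ r ∧ i % 2 = (r : ℤ) % 2}, Mmod r i)) ∧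
    (∀ i : {i : ℤ // -(r : ℤ) ≤ i ∧ i ≤ r ∧ i % 2 = (r : ℤ) % 2},
      Module.finrank ℂ (Mmod r i) = 1) ∧
    Module.finrank ℂ (JbQuot r) = r + 1 := by
  refine ⟨⟨Aux7.bigEquiv r⟩, fun i => Aux7.finrank_Mi r i.1, ?_⟩
  have h1 := ((Aux7.bigEquiv r).restrictScalars ℂ).finrank_eq
  have h2 := ((DirectSum.linearEquivFunOnFintype Aux.Rg (Aux4.Tsub r)
    (fun i => Mmod r i.1)).restrictScalars ℂ).finrank_eq
  have h3 := (LinearEquiv.piCongrRight (fun i : Aux4.Tsub r => Aux7.MiLinEquiv r i.1)).finrank_eq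
  rw [h1, h2, h3, Module.finrank_fintype_fun_eq_card, Aux4.card_Tsub]
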